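/- The bound NEW-B-1(G) = len(Ĝ) + Σ_{s∈S} vol_s(G)/M_s is less than or equal to the bound OLD-B(G) = (1 − 1/max_{s∈S} M_s)·len(G) + Σ_{s∈S} vol_s(G)/M_s, for every typed DAG task G and every assignment of core counts M_s ≥ 1. -/

import Mathlib

open MeasureTheory

namespace TypedSched

/-- A typed DAG task: directed edges `E`, type function `γ`, WCET function `c`,
and designated source and sink vertices. -/
structure TypedDAG (V S : Type) where
  E : V → V → Prop
  γ : V → S
  c : V → ℝ
  src : V
  snk : V

variable {V S : Type}

/-- Strict ancestors of `v`. -/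
def anc (G : TypedDAG V S) (v : V) : Set V := {u | Relation.TransGen G.E u v}

/-- Strict descendants of `v`. -/
def des (G : TypedDAG V S) (v : V) : Set V := {u | Relation.TransGen G.E v u}

/-- `par v`: vertices of the same type as `v` that are neither ancestors nor
descendants of `v` (and distinct from `v`). -/
def par (G : TypedDAG V S) (v : V) : Set V :=
  {u | u ≠ v ∧ G.γ u = G.γ v ∧ u ∉ anc G v ∧ u ∉ des G v}

def Acyclic (G : TypedDAG V S) : Prop := ∀ v, ¬ Relation.TransGen G.E v v

def WeightsNonneg (G : TypedDAG V S) : Prop := ∀ v, 0 ≤ G.c v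

def IsPath (G : TypedDAG V S) (π : List V) : Prop := π ≠ [] ∧ π.Chain' G.E

/-- A complete path goes from the source to the sink. -/
def IsCompletePath (G : TypedDAG V S) (π : List V) : Prop :=
  IsPath G π ∧ π.head? = some G.src ∧ π.getLast? = some G.snk

/-- Length of a path: total WCET of its vertices. -/
def len (G : TypedDAG V S) (π : List V) : ℝ := (π.map G.c).sum

/-- `len(G)`: length of the longest complete path. -/
noncomputable def lenG (G : TypedDAG V S) : ℝ :=
  sSup {x : ℝ | ∃ π : List V, IsCompletePath G π ∧ x = len G π}

/-- The scaled graph `Ĝ` with `ĉ(v) = c(v)·(1 − 1/M_{γ(v)})`. -/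
noncomputable def scaled (G : TypedDAG V S) (M : S → ℕ) : TypedDAG V S :=
  { G with c := fun v => G.c v * (1 - 1 / (M (G.γ v) : ℝ)) }

/-- `vol_s(G)`: total WCET of type-`s` vertices. -/
noncomputable def vol (G : TypedDAG V S) (s : S) : ℝ := ∑ᶠ v ∈ {v : V | G.γ v = s}, G.c v

/-- `ivs(π, s)`: interference set of the path `π` for type `s`. -/
def ivs (G : TypedDAG V S) (π : List V) (s : S) : Set V :=
  ⋃ τ ∈ {τ : V | τ ∈ π ∧ G.γ τ = s}, par G τ

/-- Sum of WCETs of type-`s` vertices on a path. -/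
def pathTypeSum [DecidableEq S] (G : TypedDAG V S) (π : List V) (s : S) : ℝ :=
  ((π.filter (fun v => decide (G.γ v = s))).map G.c).sum

/-- The NEW-B-1 bound. -/
noncomputable def newB1 [Fintype S] (G : TypedDAG V S) (M : S → ℕ) : ℝ :=
  lenG (scaled G M) + ∑ s : S, vol G s / (M s : ℝ)

/-- The OLD-B bound. -/
noncomputable def oldB [Fintype S] (G : TypedDAG V S) (M : S → ℕ) : ℝ :=
  (1 - 1 / ((Finset.univ.sup M : ℕ) : ℝ)) * lenG G + ∑ s : S, vol G s / (M s : ℝ)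

/-- Per-path bound `R̃(π)` used by NEW-B-2. -/
noncomputable def Rtilde [Fintype S] (G : TypedDAG V S) (M : S → ℕ) (π : List V) : ℝ :=
  len G π + ∑ s : S, (∑ᶠ v ∈ ivs G π s, G.c v) / (M s : ℝ)

/-- The NEW-B-2 bound. -/
noncomputable def newB2 [Fintype S] (G : TypedDAG V S) (M : S → ℕ) : ℝ :=
  sSup {x : ℝ | ∃ π : List V, IsCompletePath G π ∧ x = Rtilde G M π}

/-- An execution sequence of `G` under a work-conserving scheduler on a platform
with `M s` cores of each type `s`.  `exec v` is the set of time instants at which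
`v` executes, and `f v` is its finish time. -/
structure ExecSeq (G : TypedDAG V S) (M : S → ℕ) where
  exec : V → Set ℝ
  f : V → ℝ
  meas : ∀ v, MeasurableSet (exec v)
  /-- each vertex executes for at most its WCET -/
  dur_le : ∀ v, (volume (exec v)).toReal ≤ G.c v
  exec_nonneg : ∀ v, exec v ⊆ Set.Ici 0
  exec_lt_finish : ∀ v, exec v ⊆ Set.Iio (f v)
  f_nonneg : ∀ v, 0 ≤ f v
  /-- precedence: a vertex may execute only after all its predecessors finished -/
  prec : ∀ u v, G.E u v → exec v ⊆ Set.Ici (f u)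
  /-- at any instant at most `M s` vertices of type `s` are executing -/
  cores : ∀ (s : S) (t : ℝ), {v : V | G.γ v = s ∧ t ∈ exec v}.ncard ≤ M s
  /-- work conservation: if an eligible unfinished vertex does not execute at `t`,
  all cores of its type are busy -/
  work_conserving : ∀ (v : V) (t : ℝ), 0 ≤ t → t < f v →
    (∀ u, G.E u v → f u ≤ t) → t ∉ exec v →
    {u : V | G.γ u = G.γ v ∧ t ∈ exec u}.ncard = M (G.γ v)

/-- A critical path: a complete path on which each vertex is a
latest-finishing predecessor of the next one. -/
def IsCriticalPath (G : TypedDAG V S) {M : S → ℕ} (ex : ExecSeq G M) (π : List V) : Prop :=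
  IsCompletePath G π ∧
  ∀ p ∈ π.zip π.tail, ∀ w, G.E w p.2 → ex.f w ≤ ex.f p.1

/-- `X_s`: total time during which type-`s` critical-path vertices execute inside
their windows (the window of `τ_i` is `[f(τ_{i-1}), f(τ_i))`, with `f(τ_0) = 0`). -/
noncomputable def Xs [DecidableEq S] (G : TypedDAG V S) {M : S → ℕ} (ex : ExecSeq G M)
    (π : List V) (s : S) : ℝ :=
  ((π.zip ((0:ℝ) :: π.map ex.f)).map fun p =>
    if G.γ p.1 = s then (volume (ex.exec p.1 ∩ Set.Ico p.2 (ex.f p.1))).toReal else 0).sum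

/-- `Y_s`: total time during which type-`s` critical-path vertices are not executing
inside their windows. -/
noncomputable def Ys [DecidableEq S] (G : TypedDAG V S) {M : S → ℕ} (ex : ExecSeq G M)
    (π : List V) (s : S) : ℝ :=
  ((π.zip ((0:ℝ) :: π.map ex.f)).map fun p =>
    if G.γ p.1 = s then (volume ((Set.Ico p.2 (ex.f p.1)) \ ex.exec p.1)).toReal else 0).sum

lemma chain'_transGen {E : V → V → Prop} :
    ∀ {l : List V} {a : V}, List.Chain' E (a :: l) → ∀ b ∈ l, Relation.TransGen E a b := by
  intro l
  induction l with
  | nil => intro a _ b hb; simp at hb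
  | cons c l ih =>
    intro a h b hb
    have hac : E a c := (List.isChain_cons_cons.mp h).1
    have htl : List.Chain' E (c :: l) := (List.isChain_cons_cons.mp h).2
    rcases List.mem_cons.mp hb with rfl | hb
    · exact Relation.TransGen.single hac
    · exact Relation.TransGen.head hac (ih htl b hb)

lemma chain'_nodup {E : V → V → Prop} (hacyc : ∀ v, ¬ Relation.TransGen E v v) :
    ∀ {l : List V}, List.Chain' E l → l.Nodup := by
  intro l
  induction l with
  | nil => intro _; exact List.nodup_nil
  | cons a l ih =>
    intro h
    refine List.nodup_cons.mpr ⟨?_, ih h.tail⟩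
    intro ha
    exact hacyc a (chain'_transGen h a ha)

lemma len_le_total {G : TypedDAG V S} [Fintype V] (hc : WeightsNonneg G)
    (hacyc : Acyclic G) {π : List V} (hπ : IsCompletePath G π) :
    len G π ≤ ∑ v : V, G.c v := by
  classical
  have hnd : π.Nodup := chain'_nodup hacyc hπ.1.2
  have : len G π = ∑ v ∈ π.toFinset, G.c v := by
    unfold len
    exact (List.sum_toFinset _ hnd).symm
  rw [this]
  exact Finset.sum_le_sum_of_subset_of_nonneg (Finset.subset_univ _)
    (fun v _ _ => hc v)

lemma lenG_bddAbove {G : TypedDAG V S} [Fintype V] (hc : WeightsNonneg G)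
    (hacyc : Acyclic G) :
    BddAbove {x : ℝ | ∃ π : List V, IsCompletePath G π ∧ x = len G π} := by
  refine ⟨∑ v : V, G.c v, ?_⟩
  rintro x ⟨π, hπ, rfl⟩
  exact len_le_total hc hacyc hπ

/-- NEW-B-1 is always at most OLD-B. -/
theorem stmt3 {V S : Type} [Fintype V] [Fintype S] [Nonempty S]
    (G : TypedDAG V S) (M : S → ℕ) (hM : ∀ s, 1 ≤ M s)
    (hc : WeightsNonneg G) (hacyc : Acyclic G) :
    newB1 G M ≤ oldB G M := by
  unfold newB1 oldB
  apply add_le_add_left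
  set m : ℕ := Finset.univ.sup M with hmdef
  have hm1 : 1 ≤ m := le_trans (hM (Classical.arbitrary S))
    (Finset.le_sup (Finset.mem_univ _))
  have hmr : (1:ℝ) ≤ (m:ℝ) := by exact_mod_cast hm1
  have hmr0 : (0:ℝ) < (m:ℝ) := lt_of_lt_of_le one_pos hmr
  have hk : (0:ℝ) ≤ 1 - 1 / (m:ℝ) := by
    have : 1 / (m:ℝ) ≤ 1 := by
      rw [div_le_one hmr0]; exact hmr
    linarith
  have hlenG0 : 0 ≤ lenG G := by
    apply Real.sSup_nonneg
    rintro x ⟨π, hπ, rfl⟩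
    unfold len
    apply List.sum_nonneg
    intro x hx
    rcases List.mem_map.mp hx with ⟨v, _, rfl⟩
    exact hc v
  apply Real.sSup_le
  · rintro x ⟨π, hπ, rfl⟩
    have hπ' : IsCompletePath G π := hπ
    have step1 : len (scaled G M) π ≤ (1 - 1 / (m:ℝ)) * len G π := by
      unfold len scaled
      simp only
      have : ((π.map fun v => G.c v * (1 - 1 / (M (G.γ v) : ℝ)))).sum ≤
          ((π.map fun v => (1 - 1 / (m:ℝ)) * G.c v)).sum := by
        apply List.sum_le_sum
        intro v _
        have hMv : 1 ≤ M (G.γ v) := hM _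
        have hMvr : (0:ℝ) < (M (G.γ v) : ℝ) := by exact_mod_cast hMv
        have hle : (M (G.γ v) : ℝ) ≤ (m:ℝ) := by
          exact_mod_cast Finset.le_sup (Finset.mem_univ (G.γ v))
        have h1 : 1 / (m:ℝ) ≤ 1 / (M (G.γ v) : ℝ) :=
          one_div_le_one_div_of_le hMvr hle
        have : 1 - 1 / (M (G.γ v) : ℝ) ≤ 1 - 1 / (m:ℝ) := by linarith
        calc G.c v * (1 - 1 / (M (G.γ v) : ℝ)) ≤ G.c v * (1 - 1 / (m:ℝ)) :=
              mul_le_mul_of_nonneg_left this (hc v)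
          _ = (1 - 1 / (m:ℝ)) * G.c v := mul_comm _ _
      calc ((π.map fun v => G.c v * (1 - 1 / (M (G.γ v) : ℝ)))).sum
          ≤ ((π.map fun v => (1 - 1 / (m:ℝ)) * G.c v)).sum := this
        _ = (1 - 1 / (m:ℝ)) * (π.map G.c).sum := by
            rw [← List.sum_map_mul_left]
    have step2 : len G π ≤ lenG G :=
      le_csSup (lenG_bddAbove hc hacyc) ⟨π, hπ', rfl⟩
    calc len (scaled G M) π ≤ (1 - 1 / (m:ℝ)) * len G π := step1
      _ ≤ (1 - 1 / (m:ℝ)) * lenG G := mul_le_mul_of_nonneg_left step2 hk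
  · exact mul_nonneg hk hlenG0

end TypedSched
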